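/- With the curvature data R^l_{pab} as in the context, assume moreover that Ric_{ij} = Ric_{ji} for all i, j. Then the following are equivalent: (1) for all i, k ∈ {1,…,m}, Σ_l θ_{il} ∧ Ω^l_k + Σ_l θ_{kl} ∧ Ω^l_i − η_{ik}·Σ_{p,q,l} η^{pq}·θ_{ql} ∧ Ω^l_p = 0 in Λ^m(ℝ^m); (2) the vacuum Einstein equations Ric_{ij} − ½·η_{ij}·S = 0 hold for all i, j ∈ {1,…,m}. -/

import Mathlib

open ExteriorAlgebra

/-- The degree-1 element θ^i : the i-th standard basis vector of ℝ^m. -/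
noncomputable def θ (m : ℕ) (i : Fin m) : ExteriorAlgebra ℝ (Fin m → ℝ) :=
  ExteriorAlgebra.ι ℝ (Pi.single i 1)

/-- The volume element σ₀ = θ^1 ∧ ⋯ ∧ θ^m. -/
noncomputable def σ₀ (m : ℕ) : ExteriorAlgebra ℝ (Fin m → ℝ) :=
  ((List.finRange m).map (θ m)).prod

/-- Left interior product with the dual basis covector ε^i. -/
noncomputable def contr (m : ℕ) (i : Fin m) (x : ExteriorAlgebra ℝ (Fin m → ℝ)) :
    ExteriorAlgebra ℝ (Fin m → ℝ) :=
  CliffordAlgebra.contractLeft (LinearMap.proj i) x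

/-- θ_{i₁⋯i_p} : iterated contraction of σ₀ by ε^{i₁}, …, ε^{i_p} (in this order). -/
noncomputable def θdown (m : ℕ) (l : List (Fin m)) : ExteriorAlgebra ℝ (Fin m → ℝ) :=
  l.foldl (fun x i => contr m i x) (σ₀ m)

/-- The components η_{ij} = η^{ij} of the matrix diag(1,…,1,−1). -/
noncomputable def ηc (m : ℕ) (i j : Fin m) : ℝ :=
  if i = j then (if (i : ℕ) = m - 1 then -1 else 1) else 0

/-- The curvature 2-form Ω^l_p := Σ_{a,b} R^l_{pab}·θ^a∧θ^b. -/
noncomputable def Ω (m : ℕ) (R : Fin m → Fin m → Fin m → Fin m → ℝ) (l p : Fin m) :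
    ExteriorAlgebra ℝ (Fin m → ℝ) :=
  ∑ a : Fin m, ∑ b : Fin m, R l p a b • (θ m a * θ m b)

/-- The Ricci components Ric_{ij} := Σ_l R^l_{ilj}. -/
def Ric (m : ℕ) (R : Fin m → Fin m → Fin m → Fin m → ℝ) (i j : Fin m) : ℝ :=
  ∑ l : Fin m, R l i l j

/-- The scalar curvature S := Σ_{i,j} η^{ij}·Ric_{ij}. -/
noncomputable def Scal (m : ℕ) (R : Fin m → Fin m → Fin m → Fin m → ℝ) : ℝ :=
  ∑ i : Fin m, ∑ j : Fin m, ηc m i j * Ric m R i j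


section Stmt14AuxSection
open CliffordAlgebra

namespace Stmt14Aux

variable {m : ℕ}

lemma prod_rule (d : Module.Dual ℝ (Fin m → ℝ)) (v : Fin m → ℝ)
    (x : ExteriorAlgebra ℝ (Fin m → ℝ)) :
    contractLeft d (x * ExteriorAlgebra.ι ℝ v) =
      contractLeft d x * ExteriorAlgebra.ι ℝ v + d v • involute x := by
  induction x using CliffordAlgebra.left_induction with
  | algebraMap r =>
      rw [contractLeft_algebraMap_mul, contractLeft_ι, contractLeft_algebraMap, zero_mul, zero_add,
        AlgHom.commutes, Algebra.smul_def, ← map_mul, ← map_mul, mul_comm]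
  | add x y hx hy =>
      simp only [add_mul, map_add, hx, hy, smul_add]
      abel
  | ι_mul w y hy =>
-- careful with induction case names
      rw [mul_assoc, contractLeft_ι_mul, hy, contractLeft_ι_mul]
      simp only [mul_add, sub_mul, smul_mul_assoc, mul_smul_comm, map_mul, involute_ι,
        neg_mul, mul_neg, smul_neg, mul_assoc]
      abel


lemma invol_contr (d : Module.Dual ℝ (Fin m → ℝ)) (x : ExteriorAlgebra ℝ (Fin m → ℝ)) :
    involute (contractLeft d x) = - contractLeft d (involute x) := by
  induction x using CliffordAlgebra.left_induction with
  | algebraMap r => simp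
  | add x y hx hy => simp only [map_add, hx, hy, neg_add]
  | ι_mul w y hy =>
      simp only [contractLeft_ι_mul, map_sub, map_smul, map_mul, involute_ι, hy, neg_mul,
        mul_neg, map_neg, neg_neg, neg_sub, sub_neg_eq_add]

lemma involute_σ₀ : involute (σ₀ m) = ((-1 : ℝ) ^ m) • σ₀ m := by
  have h := CliffordAlgebra.involute_prod_map_ι (Q := (0 : QuadraticForm ℝ (Fin m → ℝ)))
    ((List.finRange m).map (fun i : Fin m => Pi.single i (1 : ℝ)))
  have hθ : θ m = fun i => ExteriorAlgebra.ι ℝ (Pi.single i (1:ℝ)) := rfl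
  simpa [σ₀, hθ, List.map_map, Function.comp_def] using h

lemma θ_mul_σ₀ (a : Fin m) : θ m a * σ₀ m = 0 := by
  have h := ExteriorAlgebra.ι_mul_prod_list (R := ℝ) (fun i : Fin m => Pi.single i (1 : ℝ)) a
  have hθ : θ m = fun i => ExteriorAlgebra.ι ℝ (Pi.single i (1:ℝ)) := rfl
  simpa [σ₀, hθ, List.ofFn_eq_map, List.map_map, Function.comp] using h

lemma θmove (a : Fin m) (L : List (Fin m)) :
    θ m a * (L.map (θ m)).prod = ((-1 : ℝ) ^ L.length) • ((L.map (θ m)).prod * θ m a) := by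
  induction L with
  | nil => simp
  | cons h t ih =>
      have h1 : θ m a * θ m h = -(θ m h * θ m a) :=
        eq_neg_of_add_eq_zero_left (ExteriorAlgebra.ι_add_mul_swap _ _)
      simp only [List.map_cons, List.prod_cons, List.length_cons, pow_succ]
      rw [← mul_assoc, h1, neg_mul, mul_assoc, ih, mul_smul_comm, mul_assoc,
        mul_neg_one, neg_smul]

lemma σ₀_mul_θ (a : Fin m) : σ₀ m * θ m a = 0 := by
  have h := θmove a (List.finRange m)
  rw [show ((List.finRange m).map (θ m)).prod = σ₀ m from rfl, θ_mul_σ₀,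
    List.length_finRange] at h
  have hne : ((-1 : ℝ) ^ m) ≠ 0 := pow_ne_zero _ (by norm_num)
  rcases smul_eq_zero.mp h.symm with h3 | h3
  · exact absurd h3 hne
  · exact h3


lemma proj_single (i a : Fin m) :
    (LinearMap.proj i : (Fin m → ℝ) →ₗ[ℝ] ℝ) (Pi.single a 1) = if i = a then 1 else 0 := by
  simp [LinearMap.proj_apply, Pi.single_apply]

lemma A1 (i a : Fin m) :
    contr m i (σ₀ m) * θ m a = (-((if i = a then (1:ℝ) else 0) * (-1:ℝ)^m)) • σ₀ m := by
  have h := prod_rule (LinearMap.proj i) (Pi.single a (1:ℝ)) (σ₀ m)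
  rw [show (ExteriorAlgebra.ι ℝ) (Pi.single a (1:ℝ)) = θ m a from rfl, σ₀_mul_θ, map_zero,
    involute_σ₀, proj_single] at h
  have h2 := (eq_neg_of_add_eq_zero_left h.symm)
  rw [show CliffordAlgebra.contractLeft (LinearMap.proj i) (σ₀ m) = contr m i (σ₀ m) from rfl]
    at h2
  rw [h2, smul_smul, neg_smul]

lemma involute_contr_σ₀ (i : Fin m) :
    involute (contr m i (σ₀ m)) = (-(-1:ℝ)^m) • contr m i (σ₀ m) := by
  show involute (CliffordAlgebra.contractLeft (LinearMap.proj i) (σ₀ m)) = _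
  rw [invol_contr, involute_σ₀, map_smul, neg_smul]
  rfl

lemma key (i l a b : Fin m) :
    θdown m [i, l] * (θ m a * θ m b) =
      (((if i = a then (1:ℝ) else 0) * (if l = b then 1 else 0))
        - ((if l = a then (1:ℝ) else 0) * (if i = b then 1 else 0))) • σ₀ m := by
  have hεε : ((-1:ℝ)^m) * ((-1:ℝ)^m) = 1 := by
    rw [← pow_add, ← two_mul, pow_mul]; norm_num
  have hstep : contr m l (contr m i (σ₀ m)) * θ m a
      = (-((if i = a then (1:ℝ) else 0) * (-1:ℝ)^m)) • contr m l (σ₀ m)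
        + (-((if l = a then (1:ℝ) else 0) * (-(-1:ℝ)^m))) • contr m i (σ₀ m) := by
    have h2 := prod_rule (LinearMap.proj l) (Pi.single a (1:ℝ)) (contr m i (σ₀ m))
    rw [show (ExteriorAlgebra.ι ℝ) (Pi.single a (1:ℝ)) = θ m a from rfl, A1 i a, map_smul,
      involute_contr_σ₀, proj_single] at h2
    have h3 := (eq_sub_of_add_eq h2.symm).symm
    rw [show CliffordAlgebra.contractLeft (LinearMap.proj l) (contr m i (σ₀ m))
        = contr m l (contr m i (σ₀ m)) from rfl,
      show CliffordAlgebra.contractLeft (LinearMap.proj l) (σ₀ m) = contr m l (σ₀ m) from rfl]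
      at h3
    rw [← h3, smul_smul, sub_eq_add_neg, ← neg_smul]
  have hθd : θdown m [i, l] = contr m l (contr m i (σ₀ m)) := rfl
  rw [hθd, ← mul_assoc, hstep, add_mul, smul_mul_assoc, smul_mul_assoc, A1, A1,
    smul_smul, smul_smul]
  rw [← add_smul]
  congr 1
  ring_nf
  rw [show ((-1:ℝ))^(m*2) = 1 from by rw [mul_comm, pow_mul]; norm_num]
  ring


lemma step1 (R : Fin m → Fin m → Fin m → Fin m → ℝ)
    (hR : ∀ l p a b, R l p a b = - R l p b a) (i k : Fin m) :
    ∑ l : Fin m, θdown m [i, l] * Ω m R l k = (-2 * Ric m R k i) • σ₀ m := by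
  have h1 : ∀ l : Fin m, θdown m [i, l] * Ω m R l k
      = (∑ a : Fin m, ∑ b : Fin m, R l k a b *
          (((if i = a then (1:ℝ) else 0) * (if l = b then 1 else 0))
            - ((if l = a then (1:ℝ) else 0) * (if i = b then 1 else 0)))) • σ₀ m := by
    intro l
    rw [Ω, Finset.mul_sum]
    rw [Finset.sum_smul]
    refine Finset.sum_congr rfl fun a _ => ?_
    rw [Finset.mul_sum, Finset.sum_smul]
    refine Finset.sum_congr rfl fun b _ => ?_
    rw [mul_smul_comm, key, smul_smul]
  simp_rw [h1]
  rw [← Finset.sum_smul]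
  congr 1
  have h2 : ∀ l : Fin m, (∑ a : Fin m, ∑ b : Fin m, R l k a b *
      (((if i = a then (1:ℝ) else 0) * (if l = b then 1 else 0))
        - ((if l = a then (1:ℝ) else 0) * (if i = b then 1 else 0))))
      = R l k i l - R l k l i := by
    intro l
    simp [mul_sub, Finset.sum_sub_distrib, mul_ite, mul_one, mul_zero, Finset.sum_ite_eq]
  rw [Finset.sum_congr rfl fun l _ => h2 l]
  have h3 : ∀ l : Fin m, R l k i l - R l k l i = -2 * R l k l i := by
    intro l; rw [hR l k i l]; ring
  rw [Finset.sum_congr rfl fun l _ => h3 l, ← Finset.mul_sum]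
  rfl

noncomputable def detF (m : ℕ) (i : ℕ) : ((Fin m → ℝ) [⋀^Fin i]→ₗ[ℝ] ℝ) :=
  if h : i = m then h ▸ Matrix.detRowAlternating else 0

lemma lift_σ₀ : ExteriorAlgebra.liftAlternating (detF m) (σ₀ m) = 1 := by
  have hσ : σ₀ m = ExteriorAlgebra.ιMulti ℝ m (fun i : Fin m => Pi.single i 1) := by
    rw [σ₀]
    simp only [ExteriorAlgebra.ιMulti_apply, List.ofFn_eq_map]
    rfl
  rw [hσ, ExteriorAlgebra.liftAlternating_apply_ιMulti]
  have hd : detF m m = Matrix.detRowAlternating := by unfold detF; rw [dif_pos rfl]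
  rw [hd]
  have hM : (fun i : Fin m => (Pi.single i 1 : Fin m → ℝ)) = (1 : Matrix (Fin m) (Fin m) ℝ) := by
    ext i j
    simp [Matrix.one_apply, Pi.single_apply, eq_comm]
  show Matrix.det _ = 1
  rw [hM, Matrix.det_one]

lemma smul_σ₀_eq_zero {c : ℝ} (h : c • σ₀ m = 0) : c = 0 := by
  have h2 := congrArg (ExteriorAlgebra.liftAlternating (detF m)) h
  rw [map_smul, map_zero, lift_σ₀] at h2
  simpa using h2

end Stmt14Aux

end Stmt14AuxSection

/-- Assuming Ric is symmetric, the equations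
Σ_l θ_{il}∧Ω^l_k + Σ_l θ_{kl}∧Ω^l_i − η_{ik}·Σ_{p,q,l} η^{pq}·θ_{ql}∧Ω^l_p = 0 (for all i,k)
are equivalent to the vacuum Einstein equations Ric_{ij} − ½·η_{ij}·S = 0 (for all i,j). -/
theorem stmt14 (m : ℕ) (hm : 2 ≤ m) (R : Fin m → Fin m → Fin m → Fin m → ℝ)
    (hR : ∀ l p a b, R l p a b = - R l p b a)
    (hsym : ∀ i j, Ric m R i j = Ric m R j i) :
    (∀ i k : Fin m,
        (∑ l : Fin m, θdown m [i, l] * Ω m R l k) +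
          (∑ l : Fin m, θdown m [k, l] * Ω m R l i) -
          ηc m i k • (∑ p : Fin m, ∑ q : Fin m, ∑ l : Fin m,
            ηc m p q • (θdown m [q, l] * Ω m R l p)) = 0) ↔
      (∀ i j : Fin m, Ric m R i j - 1 / 2 * ηc m i j * Scal m R = 0) := by
  have h4 : (∑ p : Fin m, ∑ q : Fin m, ∑ l : Fin m,
      ηc m p q • (θdown m [q, l] * Ω m R l p)) = (-2 * Scal m R) • σ₀ m := by
    have h5 : ∀ p q : Fin m, (∑ l : Fin m, ηc m p q • (θdown m [q, l] * Ω m R l p))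
        = (ηc m p q * (-2 * Ric m R p q)) • σ₀ m := by
      intro p q
      rw [← Finset.smul_sum, Stmt14Aux.step1 R hR q p, smul_smul]
    calc (∑ p : Fin m, ∑ q : Fin m, ∑ l : Fin m, ηc m p q • (θdown m [q, l] * Ω m R l p))
        = ∑ p : Fin m, ∑ q : Fin m, (ηc m p q * (-2 * Ric m R p q)) • σ₀ m := by
          exact Finset.sum_congr rfl fun p _ => Finset.sum_congr rfl fun q _ => h5 p q
      _ = (∑ p : Fin m, ∑ q : Fin m, ηc m p q * (-2 * Ric m R p q)) • σ₀ m := by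
          simp_rw [← Finset.sum_smul]
      _ = (-2 * Scal m R) • σ₀ m := by
          congr 1
          rw [Scal, Finset.mul_sum]
          refine Finset.sum_congr rfl fun p _ => ?_
          rw [Finset.mul_sum]
          exact Finset.sum_congr rfl fun q _ => by ring
  have key2 : ∀ i k : Fin m,
      (∑ l : Fin m, θdown m [i, l] * Ω m R l k) +
        (∑ l : Fin m, θdown m [k, l] * Ω m R l i) -
        ηc m i k • (∑ p : Fin m, ∑ q : Fin m, ∑ l : Fin m,
          ηc m p q • (θdown m [q, l] * Ω m R l p))
      = (-4 * (Ric m R i k - 1 / 2 * ηc m i k * Scal m R)) • σ₀ m := by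
    intro i k
    rw [Stmt14Aux.step1 R hR i k, Stmt14Aux.step1 R hR k i, h4, hsym k i, smul_smul,
      ← add_smul, ← sub_smul]
    congr 1
    ring
  constructor
  · intro H i j
    have h := H i j
    rw [key2 i j] at h
    have h2 := Stmt14Aux.smul_σ₀_eq_zero h
    linarith
  · intro H i k
    rw [key2 i k, H i k]
    norm_num
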